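/- Let n₁ ≥ n₂ ≥ ⋯ ≥ n_c be positive integers with n = Σᵢ nᵢ + s and n₁ ≤ n − s − c + 1. Then λ₁(K_s ∨ (K_{n₁} ∪ ⋯ ∪ K_{n_c})) ≤ λ₁(K_s ∨ (K_{n−s−c+1} ∪ (c−1)K₁)), with equality if and only if (n₁,…,n_c) = (n−s−c+1, 1, …, 1). -/

import Mathlib

open scoped Classical
open Matrix Polynomial

/-- The largest real eigenvalue (spectral radius for symmetric nonneg matrices). -/
noncomputable def lam1 {V : Type*} [Fintype V] (A : Matrix V V ℝ) : ℝ :=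
  sSup {μ : ℝ | ∃ v : V → ℝ, v ≠ 0 ∧ A.mulVec v = μ • v}

/-- The adjacency matrix of a simple graph, over ℝ. -/
noncomputable def adjMat {V : Type*} [Fintype V] (G : SimpleGraph V) : Matrix V V ℝ :=
  Matrix.of fun i j => if G.Adj i j then 1 else 0

/-- The number of connected components of G − S. -/
noncomputable def numComp {V : Type*} (G : SimpleGraph V) (S : Set V) : ℕ :=
  Nat.card ((G.induce Sᶜ).ConnectedComponent)

/-- `G` is `r`-tough. -/
def IsTough {V : Type*} [Fintype V] (r : ℝ) (G : SimpleGraph V) : Prop :=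
  ∀ S : Finset V, 2 ≤ numComp G ↑S → r * (numComp G ↑S : ℝ) ≤ (S.card : ℝ)

/-- `K_s ∨ (K_a ∪ (n - s - a) K₁)` on `Fin n`. -/
def splitJoin (s a n : ℕ) : SimpleGraph (Fin n) where
  Adj i j := i ≠ j ∧ (i.val < s ∨ j.val < s ∨ (i.val < s + a ∧ j.val < s + a))
  symm := by constructor; rintro i j ⟨h1, h2⟩; exact ⟨h1.symm, by tauto⟩
  loopless := by constructor; rintro i ⟨h, -⟩; exact h rfl

/-- `K_s ∨ (K_{m 0} ∪ ⋯ ∪ K_{m (c-1)})`. -/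
def cliquesJoin (s c : ℕ) (m : Fin c → ℕ) :
    SimpleGraph (Fin s ⊕ (Σ i : Fin c, Fin (m i))) where
  Adj x y := x ≠ y ∧ (x.isLeft ∨ y.isLeft ∨
    ∃ (i : Fin c) (a b : Fin (m i)), x = Sum.inr ⟨i, a⟩ ∧ y = Sum.inr ⟨i, b⟩)
  symm := by constructor; rintro x y ⟨h1, h2⟩; refine ⟨h1.symm, ?_⟩; tauto
  loopless := by constructor; rintro x ⟨h, -⟩; exact h rfl


open scoped RealInnerProductSpace

set_option linter.unusedSectionVars false
set_option linter.unusedVariables false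

section Spectral
variable {V : Type*} [Fintype V] [DecidableEq V]

lemma eigen_eq_eigenvalues {A : Matrix V V ℝ} (hA : A.IsHermitian) {μ : ℝ} {v : V → ℝ}
    (hv : v ≠ 0) (heig : A *ᵥ v = μ • v) : ∃ i, μ = hA.eigenvalues i := by
  classical
  set B := hA.eigenvectorBasis with hB
  set x : EuclideanSpace ℝ V := (WithLp.equiv 2 (V → ℝ)).symm v with hxdef
  have hx0 : x ≠ 0 := by rw [hxdef, WithLp.equiv_symm_apply]; simpa using hv
  have hTx : Matrix.toEuclideanLin A x = μ • x := by
    rw [hxdef, WithLp.equiv_symm_apply, toEuclideanLin_apply_piLp_toLp, heig]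
    rfl
  have hsym := (Matrix.isHermitian_iff_isSymmetric).1 hA
  have hTB : ∀ i, Matrix.toEuclideanLin A (B i) = hA.eigenvalues i • (B i) := by
    intro i
    have h := hA.mulVec_eigenvectorBasis i
    apply (WithLp.equiv 2 (V → ℝ)).injective
    exact h
  by_contra hno
  push_neg at hno
  have hall : ∀ i, B.repr x i = 0 := by
    intro i
    have h1 : ⟪(B i), Matrix.toEuclideanLin A x⟫ = hA.eigenvalues i * ⟪B i, x⟫ := by
      rw [← hsym (B i) x, hTB i, inner_smul_left]
      simp
    have h2 : ⟪(B i), Matrix.toEuclideanLin A x⟫ = μ * ⟪B i, x⟫ := by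
      rw [hTx, inner_smul_right]
    have h3 : ⟪B i, x⟫ = 0 := by
      by_contra hc
      exact hno i (mul_right_cancel₀ hc (h2.symm.trans h1))
    rw [B.repr_apply_apply, h3]
  have : B.repr x = 0 := by
    ext i; exact hall i
  exact hx0 (by simpa using congrArg B.repr.symm this)

lemma inner_euclid (a b : EuclideanSpace ℝ V) :
    ⟪a, b⟫ = (WithLp.equiv 2 (V → ℝ) a) ⬝ᵥ (WithLp.equiv 2 (V → ℝ) b) := by
  simp [PiLp.inner_apply, dotProduct, RCLike.inner_apply, mul_comm]

variable [Nonempty V]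

lemma lam1_spec {A : Matrix V V ℝ} (hA : A.IsHermitian) :
    (∃ v : V → ℝ, v ≠ 0 ∧ A *ᵥ v = lam1 A • v) ∧
      (∀ (μ : ℝ) (v : V → ℝ), v ≠ 0 → A *ᵥ v = μ • v → μ ≤ lam1 A) := by
  classical
  obtain ⟨i₀, hi₀⟩ := Finite.exists_max hA.eigenvalues
  set B := hA.eigenvectorBasis with hB
  have hmem : ∀ i, hA.eigenvalues i ∈ {μ : ℝ | ∃ v : V → ℝ, v ≠ 0 ∧ A.mulVec v = μ • v} := by
    intro i
    refine ⟨⇑(B i), ?_, hA.mulVec_eigenvectorBasis i⟩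
    have := B.orthonormal.ne_zero i
    exact fun h => this ((WithLp.equiv 2 (V → ℝ)).injective h)
  have hub : ∀ μ ∈ {μ : ℝ | ∃ v : V → ℝ, v ≠ 0 ∧ A.mulVec v = μ • v}, μ ≤ hA.eigenvalues i₀ := by
    rintro μ ⟨v, hv, heig⟩
    obtain ⟨i, rfl⟩ := eigen_eq_eigenvalues hA hv heig
    exact hi₀ i
  have hl : lam1 A = hA.eigenvalues i₀ :=
    le_antisymm (csSup_le ⟨_, hmem i₀⟩ hub) (le_csSup ⟨_, hub⟩ (hmem i₀))
  rw [hl]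
  exact ⟨⟨_, (hmem i₀).choose_spec.1, (hmem i₀).choose_spec.2⟩, fun μ v hv he => hub μ ⟨v, hv, he⟩⟩

lemma rayleigh_le_lam1 {A : Matrix V V ℝ} (hA : A.IsHermitian) (w : V → ℝ) :
    w ⬝ᵥ (A *ᵥ w) ≤ lam1 A * (w ⬝ᵥ w) := by
  classical
  set B := hA.eigenvectorBasis with hB
  set x : EuclideanSpace ℝ V := (WithLp.equiv 2 (V → ℝ)).symm w with hxdef
  have hsym := (Matrix.isHermitian_iff_isSymmetric).1 hA
  have hTx : Matrix.toEuclideanLin A x = (WithLp.equiv 2 (V → ℝ)).symm (A *ᵥ w) := by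
    rw [hxdef, WithLp.equiv_symm_apply, toEuclideanLin_apply_piLp_toLp]
  have hreprT : ∀ i, B.repr (Matrix.toEuclideanLin A x) i = hA.eigenvalues i * B.repr x i := by
    intro i
    rw [B.repr_apply_apply, B.repr_apply_apply, ← hsym (B i) x]
    have hTB : Matrix.toEuclideanLin A (B i) = hA.eigenvalues i • (B i) :=
      (WithLp.equiv 2 (V → ℝ)).injective (hA.mulVec_eigenvectorBasis i)
    rw [hTB, inner_smul_left]; simp
  have h1 : w ⬝ᵥ (A *ᵥ w) = ⟪x, Matrix.toEuclideanLin A x⟫ := by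
    rw [inner_euclid, hTx, hxdef]; rfl
  have h2 : w ⬝ᵥ w = ⟪x, x⟫ := by rw [inner_euclid, hxdef]; rfl
  have h3 : ⟪x, Matrix.toEuclideanLin A x⟫ = ∑ i, hA.eigenvalues i * (B.repr x i)^2 := by
    rw [← B.repr.inner_map_map x (Matrix.toEuclideanLin A x), inner_euclid]
    simp only [dotProduct]
    refine Finset.sum_congr rfl fun i _ => ?_
    have : (WithLp.equiv 2 (V → ℝ)) (B.repr x) i = B.repr x i := rfl
    rw [this]
    have : (WithLp.equiv 2 (V → ℝ)) (B.repr (Matrix.toEuclideanLin A x)) i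
        = B.repr (Matrix.toEuclideanLin A x) i := rfl
    rw [this, hreprT i]; ring
  have h4 : ⟪x, x⟫ = ∑ i, (B.repr x i)^2 := by
    rw [← B.repr.inner_map_map x x, inner_euclid]
    simp only [dotProduct]
    exact Finset.sum_congr rfl fun i _ => (sq (B.repr x i)).symm
  obtain ⟨i₀, hi₀⟩ := Finite.exists_max hA.eigenvalues
  have hlam : hA.eigenvalues i₀ ≤ lam1 A := by
    refine (lam1_spec hA).2 _ ⇑(B i₀) ?_ (hA.mulVec_eigenvectorBasis i₀)
    have := B.orthonormal.ne_zero i₀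
    exact fun h => this ((WithLp.equiv 2 (V → ℝ)).injective h)
  calc w ⬝ᵥ (A *ᵥ w) = ∑ i, hA.eigenvalues i * (B.repr x i)^2 := by rw [h1, h3]
    _ ≤ ∑ i, lam1 A * (B.repr x i)^2 := by
        refine Finset.sum_le_sum fun i _ => ?_
        exact mul_le_mul_of_nonneg_right ((hi₀ i).trans hlam) (sq_nonneg _)
    _ = lam1 A * (w ⬝ᵥ w) := by rw [h2, h4, Finset.mul_sum]

lemma dot_self_pos {w : V → ℝ} (hw : w ≠ 0) : 0 < w ⬝ᵥ w := by
  rcases lt_or_eq_of_le (Finset.sum_nonneg fun i _ => mul_self_nonneg (w i) : 0 ≤ w ⬝ᵥ w) with h | h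
  · exact h
  · exact absurd (dotProduct_self_eq_zero.mp h.symm) hw

lemma lt_lam1_of_rayleigh {A : Matrix V V ℝ} (hA : A.IsHermitian) {μ : ℝ} {w : V → ℝ}
    (hw : w ≠ 0) (h : μ * (w ⬝ᵥ w) < w ⬝ᵥ (A *ᵥ w)) : μ < lam1 A :=
  lt_of_mul_lt_mul_right (h.trans_le (rayleigh_le_lam1 hA w)) (dot_self_pos hw).le

lemma exists_nonneg_eigenvec {A : Matrix V V ℝ} (hA : A.IsHermitian)
    (hnn : ∀ i j, 0 ≤ A i j) :
    ∃ v : V → ℝ, v ≠ 0 ∧ (∀ u, 0 ≤ v u) ∧ A *ᵥ v = lam1 A • v := by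
  classical
  obtain ⟨⟨v, hv, heig⟩, hub⟩ := lam1_spec hA
  set u : V → ℝ := fun k => |v k| with hu
  have hu0 : u ≠ 0 := by
    intro h
    apply hv
    funext k
    have := congrFun h k
    simpa [hu, abs_eq_zero] using this
  have huu : u ⬝ᵥ u = v ⬝ᵥ v := by
    simp [dotProduct, hu, ← abs_mul, abs_mul_self]
  have hray : lam1 A * (v ⬝ᵥ v) ≤ u ⬝ᵥ (A *ᵥ u) := by
    have h1 : v ⬝ᵥ (A *ᵥ v) = lam1 A * (v ⬝ᵥ v) := by
      rw [heig]; simp [dotProduct, Finset.mul_sum]; ring_nf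
      exact Finset.sum_congr rfl fun i _ => by ring
    rw [← h1]
    simp only [dotProduct, mulVec, dotProduct]
    refine Finset.sum_le_sum fun x _ => ?_
    rw [Finset.mul_sum, Finset.mul_sum]
    refine Finset.sum_le_sum fun y _ => ?_
    calc v x * (A x y * v y) ≤ |v x * (A x y * v y)| := le_abs_self _
      _ = |v x| * (A x y * |v y|) := by
          rw [abs_mul, abs_mul, abs_of_nonneg (hnn x y)]
      _ = u x * (A x y * u y) := rfl
  -- now u is a maximizer of the Rayleigh quotient on the sphere
  set E := EuclideanSpace ℝ V
  set T : E →L[ℝ] E := LinearMap.toContinuousLinearMap (Matrix.toEuclideanLin A) with hT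
  have hTapp : ∀ y : E, T y = (WithLp.equiv 2 (V → ℝ)).symm (A *ᵥ (WithLp.equiv 2 (V → ℝ) y)) := by
    intro y
    simp only [hT, LinearMap.coe_toContinuousLinearMap']
    rw [Matrix.toEuclideanLin_apply]
    rfl
  have hsa : IsSelfAdjoint T := by
    rw [ContinuousLinearMap.isSelfAdjoint_iff_isSymmetric]
    have := (Matrix.isHermitian_iff_isSymmetric).1 hA
    exact this
  set x₀ : E := (WithLp.equiv 2 (V → ℝ)).symm u with hx₀
  have hx₀0 : x₀ ≠ 0 := by rw [hx₀, WithLp.equiv_symm_apply]; exact fun h => hu0 (congrArg (WithLp.ofLp (p := 2)) h)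
  have hdotT : ∀ y : E, T.reApplyInnerSelf y = (WithLp.equiv 2 (V → ℝ) y) ⬝ᵥ (A *ᵥ (WithLp.equiv 2 (V → ℝ) y)) := by
    intro y
    rw [ContinuousLinearMap.reApplyInnerSelf_apply]
    rw [inner_euclid (T y) y, hTapp y]
    rw [dotProduct_comm]
    rfl
  have hnorm : ∀ y : E, ⟪y, y⟫ = ‖y‖ ^ 2 := fun y => real_inner_self_eq_norm_sq y
  have hmax : IsMaxOn T.reApplyInnerSelf (Metric.sphere (0 : E) ‖x₀‖) x₀ := by
    intro y hy
    have hy' : ‖y‖ = ‖x₀‖ := by simpa using hy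
    have h1 : T.reApplyInnerSelf y ≤ lam1 A * ((WithLp.equiv 2 (V → ℝ) y) ⬝ᵥ (WithLp.equiv 2 (V → ℝ) y)) := by
      rw [hdotT y]; exact rayleigh_le_lam1 hA _
    have h2 : (WithLp.equiv 2 (V → ℝ) y) ⬝ᵥ (WithLp.equiv 2 (V → ℝ) y) = u ⬝ᵥ u := by
      have e1 : (WithLp.equiv 2 (V → ℝ) y) ⬝ᵥ (WithLp.equiv 2 (V → ℝ) y) = ⟪y, y⟫ :=
        (inner_euclid y y).symm
      have e2 : u ⬝ᵥ u = ⟪x₀, x₀⟫ := (inner_euclid x₀ x₀).symm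
      rw [e1, e2, hnorm, hnorm, hy']
    have h3 : T.reApplyInnerSelf x₀ = u ⬝ᵥ (A *ᵥ u) := hdotT x₀
    have : lam1 A * (u ⬝ᵥ u) ≤ u ⬝ᵥ (A *ᵥ u) := by rw [huu]; exact hray
    calc T.reApplyInnerSelf y ≤ lam1 A * (u ⬝ᵥ u) := by rw [← h2]; exact h1
      _ ≤ u ⬝ᵥ (A *ᵥ u) := this
      _ = T.reApplyInnerSelf x₀ := h3.symm
  have hev := hsa.hasEigenvector_of_isMaxOn hx₀0 hmax
  have heq : T x₀ = (⨆ x : { x : E // x ≠ 0 }, T.rayleighQuotient x) • x₀ := by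
    have := hev.1
    rw [Module.End.mem_eigenspace_iff] at this
    exact this
  set ρ : ℝ := ⨆ x : { x : E // x ≠ 0 }, T.rayleighQuotient x with hρ
  have heigu : A *ᵥ u = ρ • u := by
    have := congrArg (WithLp.equiv 2 (V → ℝ)) heq
    rw [hTapp x₀] at this
    simp [hx₀, WithLp.equiv_symm_apply] at this; exact this
  have hρlam : ρ = lam1 A := by
    refine le_antisymm (hub ρ u hu0 heigu) ?_
    have h1 : u ⬝ᵥ (A *ᵥ u) = ρ * (u ⬝ᵥ u) := by
      rw [heigu]
      simp [dotProduct, Finset.mul_sum]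
      exact Finset.sum_congr rfl fun i _ => by ring
    have h2 : lam1 A * (u ⬝ᵥ u) ≤ ρ * (u ⬝ᵥ u) := by
      rw [← h1, huu]; exact hray
    exact le_of_mul_le_mul_right h2 (dot_self_pos hu0)
  exact ⟨u, hu0, fun k => abs_nonneg _, by rw [heigu, hρlam]⟩
end Spectral

section Graph
variable {s c : ℕ} (m : Fin c → ℕ)

noncomputable def cvec (s : ℕ) {c : ℕ} (m : Fin c → ℕ) (a : ℝ) (b : Fin c → ℝ) :
    (Fin s ⊕ (Σ i : Fin c, Fin (m i))) → ℝ :=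
  Sum.elim (fun _ => a) (fun p => b p.1)

lemma adj_ll (x y : Fin s) :
    adjMat (cliquesJoin s c m) (.inl x) (.inl y) = if x = y then 0 else 1 := by
  simp only [adjMat, cliquesJoin, Matrix.of_apply]
  by_cases h : x = y <;> simp [h, SimpleGraph.Adj]

lemma adj_lr (x : Fin s) (p : Σ i : Fin c, Fin (m i)) :
    adjMat (cliquesJoin s c m) (.inl x) (.inr p) = 1 := by
  simp [adjMat, cliquesJoin]

lemma adj_rl (x : Fin s) (p : Σ i : Fin c, Fin (m i)) :
    adjMat (cliquesJoin s c m) (.inr p) (.inl x) = 1 := by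
  simp [adjMat, cliquesJoin]

lemma adj_rr (p q : Σ i : Fin c, Fin (m i)) :
    adjMat (cliquesJoin s c m) (.inr p) (.inr q) = if p.1 = q.1 ∧ p ≠ q then 1 else 0 := by
  have hiff : (cliquesJoin s c m).Adj (.inr p) (.inr q) ↔ (p.1 = q.1 ∧ p ≠ q) := by
    constructor
    · rintro ⟨hne, h⟩
      rcases h with h | h | ⟨k, a', b', h1, h2⟩
      · simp at h
      · simp at h
      · rw [Sum.inr.injEq] at h1 h2
        subst h1; subst h2
        exact ⟨rfl, fun hh => hne (by rw [hh])⟩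
    · rcases p with ⟨i, a⟩; rcases q with ⟨j, b⟩
      rintro ⟨h1, h2⟩
      obtain rfl : i = j := h1
      exact ⟨by simpa using h2, Or.inr (Or.inr ⟨i, a, b, rfl, rfl⟩)⟩
  simp only [adjMat, Matrix.of_apply]
  by_cases h : p.1 = q.1 ∧ p ≠ q
  · rw [if_pos (hiff.2 h), if_pos h]
  · rw [if_neg (fun hh => h (hiff.1 hh)), if_neg h]

lemma mul_cvec (a : ℝ) (b : Fin c → ℝ) :
    adjMat (cliquesJoin s c m) *ᵥ (cvec s m a b) =
      cvec s m (((s : ℝ) - 1) * a + ∑ j, (m j : ℝ) * b j)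
        (fun k => (s : ℝ) * a + ((m k : ℝ) - 1) * b k) := by
  funext u
  cases u with
  | inl x =>
    show (∑ w, adjMat (cliquesJoin s c m) (.inl x) w * (cvec s m a b) w) = _
    rw [Fintype.sum_sum_type]
    have h1 : ∑ y : Fin s, adjMat (cliquesJoin s c m) (.inl x) (.inl y) * (cvec s m a b) (.inl y)
        = ((s : ℝ) - 1) * a := by
      simp only [adj_ll, cvec, Sum.elim_inl]
      rw [Finset.sum_congr rfl (fun y _ => by
        show (if x = y then (0:ℝ) else 1) * a = a - (if x = y then a else 0)
        by_cases h : x = y <;> simp [h])]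
      rw [Finset.sum_sub_distrib, Finset.sum_const, Finset.sum_ite_eq Finset.univ x fun _ => a]
      simp [mul_comm]
      ring
    have h2 : ∑ p : (Σ i : Fin c, Fin (m i)), adjMat (cliquesJoin s c m) (.inl x) (.inr p) * (cvec s m a b) (.inr p)
        = ∑ j, (m j : ℝ) * b j := by
      simp only [adj_lr, cvec, Sum.elim_inr, one_mul]
      rw [← Finset.univ_sigma_univ, Finset.sum_sigma]
      exact Finset.sum_congr rfl fun j _ => by simp [mul_comm]
    rw [h1, h2]; rfl
  | inr p =>
    rcases p with ⟨k, t⟩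
    show (∑ w, adjMat (cliquesJoin s c m) (.inr ⟨k, t⟩) w * (cvec s m a b) w) = _
    rw [Fintype.sum_sum_type]
    have h1 : ∑ y : Fin s, adjMat (cliquesJoin s c m) (.inr ⟨k, t⟩) (.inl y) * (cvec s m a b) (.inl y)
        = (s : ℝ) * a := by
      simp [adj_rl, cvec]
    have h2 : ∑ p : (Σ i : Fin c, Fin (m i)), adjMat (cliquesJoin s c m) (.inr ⟨k, t⟩) (.inr p) * (cvec s m a b) (.inr p)
        = ((m k : ℝ) - 1) * b k := by
      simp only [adj_rr, cvec, Sum.elim_inr]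
      rw [← Finset.univ_sigma_univ, Finset.sum_sigma]
      rw [Finset.sum_eq_single_of_mem k (Finset.mem_univ k)]
      · have : ∀ r : Fin (m k), (if ((⟨k,t⟩ : Σ i : Fin c, Fin (m i)).1 = (⟨k,r⟩ : Σ i : Fin c, Fin (m i)).1 ∧ (⟨k,t⟩ : Σ i : Fin c, Fin (m i)) ≠ ⟨k,r⟩) then (1:ℝ) else 0) * b (⟨k,r⟩ : Σ i : Fin c, Fin (m i)).1
            = b k - (if r = t then b k else 0) := by
          intro r
          by_cases h : r = t
          · subst h; simp
          · rw [if_pos ⟨rfl, by simp only [ne_eq, Sigma.mk.inj_iff, heq_eq_eq, true_and]; exact Ne.symm h⟩, if_neg h]; ring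
        rw [Finset.sum_congr rfl fun r _ => this r]
        rw [Finset.sum_sub_distrib, Finset.sum_const, Finset.sum_ite_eq' Finset.univ t fun _ => b k]
        simp [Finset.card_univ, nsmul_eq_mul]
        ring
      · intro j _ hj
        apply Finset.sum_eq_zero
        intro r _
        rw [if_neg (by simp [Ne.symm hj]), zero_mul]
    rw [h1, h2]; rfl

lemma dotv (a : ℝ) (b : Fin c → ℝ) (v : (Fin s ⊕ (Σ i : Fin c, Fin (m i))) → ℝ) :
    (cvec s m a b) ⬝ᵥ v = a * (∑ x, v (.inl x)) + ∑ j, b j * (∑ t, v (.inr ⟨j, t⟩)) := by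
  show (∑ w, (cvec s m a b) w * v w) = _
  rw [Fintype.sum_sum_type]
  congr 1
  · simp [cvec, Finset.mul_sum]
  · rw [← Finset.univ_sigma_univ, Finset.sum_sigma]
    exact Finset.sum_congr rfl fun j _ => by simp [cvec, Finset.mul_sum]

section Graph

lemma adjMat_transpose {V : Type*} [Fintype V] (G : SimpleGraph V) :
    (adjMat G)ᵀ = adjMat G := by
  ext i j
  simp only [adjMat, Matrix.transpose_apply, Matrix.of_apply]
  rw [SimpleGraph.adj_comm]

lemma adjMat_isHermitian {V : Type*} [Fintype V] (G : SimpleGraph V) :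
    (adjMat G).IsHermitian := by
  ext i j
  simp only [adjMat, Matrix.conjTranspose_apply, Matrix.of_apply, star_trivial]
  rw [SimpleGraph.adj_comm]

lemma adjMat_nonneg {V : Type*} [Fintype V] (G : SimpleGraph V) (i j : V) :
    0 ≤ adjMat G i j := by
  simp only [adjMat, Matrix.of_apply]
  split <;> norm_num

lemma dot_mulVec_symm {V : Type*} [Fintype V] {A : Matrix V V ℝ} (hT : Aᵀ = A)
    (u w : V → ℝ) : u ⬝ᵥ (A *ᵥ w) = (A *ᵥ u) ⬝ᵥ w := by
  rw [Matrix.dotProduct_mulVec, ← Matrix.mulVec_transpose, hT]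

lemma lam1_adj_nonneg {V : Type*} [Fintype V] [DecidableEq V] [Nonempty V]
    (G : SimpleGraph V) : 0 ≤ lam1 (adjMat G) := by
  obtain ⟨u₀⟩ := ‹Nonempty V›
  have h := rayleigh_le_lam1 (adjMat_isHermitian G) (Pi.single u₀ 1)
  have h1 : (Pi.single u₀ 1 : V → ℝ) ⬝ᵥ (adjMat G *ᵥ Pi.single u₀ 1) = 0 := by
    simp only [dotProduct, Matrix.mulVec, Pi.single_apply]
    refine Finset.sum_eq_zero fun x _ => ?_
    by_cases hx : x = u₀
    · subst hx
      simp [adjMat]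
    · simp [hx]
  have h2 : (Pi.single u₀ 1 : V → ℝ) ⬝ᵥ (Pi.single u₀ 1 : V → ℝ) = 1 := by
    simp [dotProduct, Pi.single_apply, Finset.sum_ite_eq']
  rw [h1, h2, mul_one] at h
  exact h

variable {s c : ℕ}

lemma exists_cvec_eigen (hc : 0 < c) (m : Fin c → ℕ) (hm : ∀ j, 1 ≤ m j) :
    ∃ (a : ℝ) (b : Fin c → ℝ), 0 ≤ a ∧ (∀ j, 0 ≤ b j) ∧ cvec s m a b ≠ 0 ∧
      adjMat (cliquesJoin s c m) *ᵥ cvec s m a b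
        = lam1 (adjMat (cliquesJoin s c m)) • cvec s m a b := by
  haveI : Nonempty (Fin s ⊕ (Σ i : Fin c, Fin (m i))) :=
    ⟨.inr ⟨⟨0, hc⟩, ⟨0, hm ⟨0, hc⟩⟩⟩⟩
  set A := adjMat (cliquesJoin s c m) with hA
  set μ := lam1 A with hμ
  obtain ⟨v, hv0, hvnn, hveig⟩ := exists_nonneg_eigenvec
    (adjMat_isHermitian (cliquesJoin s c m)) (fun i j => adjMat_nonneg _ i j)
  set S : ℝ := ∑ x, v (.inl x) with hS
  set C : Fin c → ℝ := fun j => ∑ t, v (.inr ⟨j, t⟩) with hC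
  -- class sum equations
  have key : ∀ (a' : ℝ) (b' : Fin c → ℝ),
      (((s : ℝ) - 1) * a' + ∑ j, (m j : ℝ) * b' j) * S
        + ∑ j, ((s : ℝ) * a' + ((m j : ℝ) - 1) * b' j) * C j
      = μ * (a' * S + ∑ j, b' j * C j) := by
    intro a' b'
    have h1 : (cvec s m a' b') ⬝ᵥ (A *ᵥ v) = μ * (a' * S + ∑ j, b' j * C j) := by
      rw [hveig]
      rw [dotProduct_smul, dotv]
      rfl
    have h2 : (cvec s m a' b') ⬝ᵥ (A *ᵥ v) = (A *ᵥ cvec s m a' b') ⬝ᵥ v :=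
      dot_mulVec_symm (adjMat_transpose _) _ _
    rw [h2, mul_cvec, dotv] at h1
    exact h1
  have eqL : (((s:ℝ) - 1) * S + ∑ j, (s : ℝ) * C j) = μ * S := by
    have := key 1 0
    simpa using this
  have eqC : ∀ i, (m i : ℝ) * S + ((m i : ℝ) - 1) * C i = μ * C i := by
    intro i
    have h := key 0 (fun k => if k = i then 1 else 0)
    have e1 : ∑ j, (m j : ℝ) * (if j = i then 1 else 0) = (m i : ℝ) := by
      rw [Finset.sum_congr rfl (fun j _ => by
        show (m j : ℝ) * (if j = i then 1 else 0) = if j = i then (m j : ℝ) else 0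
        split <;> ring)]
      rw [Finset.sum_ite_eq' Finset.univ i]
      simp
    have e2 : ∑ j, ((s : ℝ) * 0 + ((m j : ℝ) - 1) * (if j = i then 1 else 0)) * C j
        = ((m i : ℝ) - 1) * C i := by
      rw [Finset.sum_congr rfl (fun j _ => by
        show ((s : ℝ) * 0 + ((m j : ℝ) - 1) * (if j = i then 1 else 0)) * C j
          = if j = i then ((m j : ℝ) - 1) * C j else 0
        split <;> ring)]
      rw [Finset.sum_ite_eq' Finset.univ i]
      simp
    have e3 : ∑ j, (if j = i then (1:ℝ) else 0) * C j = C i := by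
      rw [Finset.sum_congr rfl (fun j _ => by
        show (if j = i then (1:ℝ) else 0) * C j = if j = i then C j else 0
        split <;> ring)]
      rw [Finset.sum_ite_eq' Finset.univ i]
      simp
    rw [e1, e2, e3] at h
    linarith [h]
  rw [← Finset.mul_sum] at eqL
  have hmne : ∀ j : Fin c, (m j : ℝ) ≠ 0 := fun j => by
    have := hm j; positivity
  have hSnn : 0 ≤ S := Finset.sum_nonneg fun x _ => hvnn _
  have hCnn : ∀ j, 0 ≤ C j := fun j => Finset.sum_nonneg fun t _ => hvnn _
  set a : ℝ := if s = 0 then 0 else S / s with ha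
  set b : Fin c → ℝ := fun j => C j / m j with hb
  have hSa : (s : ℝ) * a = S := by
    by_cases hs : s = 0
    · rw [ha, if_pos hs]
      subst hs
      rw [hS]
      simp
    · rw [ha, if_neg hs]
      field_simp
  have hCb : ∀ j, (m j : ℝ) * b j = C j := fun j => by
    rw [hb, mul_comm]
    exact div_mul_cancel₀ (C j) (hmne j)
  have hann : 0 ≤ a := by
    rw [ha]; split
    · exact le_refl 0
    · positivity
  have hbnn : ∀ j, 0 ≤ b j := fun j => by
    rw [hb]
    have h1 := hCnn j
    have h2 : (0:ℝ) < m j := by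
      have := hm j
      positivity
    exact div_nonneg h1 h2.le
  have hsumb : ∑ j, (m j : ℝ) * b j = ∑ j, C j :=
    Finset.sum_congr rfl fun j _ => hCb j
  have heig : adjMat (cliquesJoin s c m) *ᵥ cvec s m a b = μ • cvec s m a b := by
    rw [mul_cvec]
    funext u
    cases u with
    | inl x =>
      have hs : (s : ℝ) ≠ 0 := by
        have := x.pos
        positivity
      simp only [Pi.smul_apply, smul_eq_mul, cvec, Sum.elim_inl]
      refine mul_left_cancel₀ hs ?_
      rw [hsumb]
      linear_combination eqL + ((s : ℝ) - 1 - μ) * hSa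
    | inr p =>
      rcases p with ⟨k, t⟩
      simp only [Pi.smul_apply, smul_eq_mul, cvec, Sum.elim_inr]
      refine mul_left_cancel₀ (hmne k) ?_
      linear_combination eqC k + (m k : ℝ) * hSa + ((m k : ℝ) - 1 - μ) * (hCb k)
  have hne : cvec s m a b ≠ 0 := by
    obtain ⟨u₀, hu₀⟩ := Function.ne_iff.1 hv0
    have hu₀pos : 0 < v u₀ := (hvnn u₀).lt_of_ne (Ne.symm hu₀)
    cases u₀ with
    | inl x =>
      have hSpos : 0 < S := by
        refine lt_of_lt_of_le hu₀pos ?_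
        exact Finset.single_le_sum (f := fun y => v (Sum.inl y)) (fun i _ => hvnn _)
          (Finset.mem_univ x)
      have hs : (s : ℝ) ≠ 0 := by
        have := x.pos
        positivity
      have hapos : 0 < a := by
        have : (s:ℝ) * a = S := hSa
        nlinarith [Nat.cast_nonneg (α := ℝ) s]
      intro h0
      have := congrFun h0 (Sum.inl x)
      simp only [cvec, Sum.elim_inl, Pi.zero_apply] at this
      exact absurd this (ne_of_gt hapos)
    | inr p =>
      rcases p with ⟨j, t⟩
      have hCpos : 0 < C j := by
        refine lt_of_lt_of_le hu₀pos ?_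
        exact Finset.single_le_sum (f := fun r => v (Sum.inr ⟨j, r⟩)) (fun i _ => hvnn _)
          (Finset.mem_univ t)
      have hbpos : 0 < b j := by
        rw [hb]
        have := hm j
        positivity
      intro h0
      have := congrFun h0 (Sum.inr ⟨j, t⟩)
      simp only [cvec, Sum.elim_inr, Pi.zero_apply] at this
      exact absurd this (ne_of_gt hbpos)
  exact ⟨a, b, hann, hbnn, hne, heig⟩
end Graph

section Step
variable {s c : ℕ}

lemma dotcc (m : Fin c → ℕ) (a a' : ℝ) (b b' : Fin c → ℝ) :
    (cvec s m a b) ⬝ᵥ (cvec s m a' b')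
      = (s : ℝ) * (a * a') + ∑ j, (m j : ℝ) * (b j * b' j) := by
  rw [dotv]
  congr 1
  · simp only [cvec, Sum.elim_inl, Finset.sum_const, Finset.card_univ, Fintype.card_fin,
      nsmul_eq_mul]
    ring
  · refine Finset.sum_congr rfl fun j _ => ?_
    simp only [cvec, Sum.elim_inr, Finset.sum_const, Finset.card_univ, Fintype.card_fin,
      nsmul_eq_mul]
    ring

lemma sum_shift {z i : Fin c} (hzi : z ≠ i) (F G : Fin c → ℝ)
    (h : ∀ j, j ≠ z → j ≠ i → G j = F j) :
    ∑ j, G j = (∑ j, F j) + (G z - F z) + (G i - F i) := by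
  have h1 : ∑ j, (G j - F j) = (G z - F z) + (G i - F i) := by
    rw [← Finset.sum_subset (Finset.subset_univ ({z, i} : Finset (Fin c)))]
    · rw [Finset.sum_pair hzi]
    · intro x _ hx
      simp only [Finset.mem_insert, Finset.mem_singleton] at hx
      push_neg at hx
      rw [h x hx.1 hx.2, sub_self]
  have h2 : ∑ j, (G j - F j) = (∑ j, G j) - ∑ j, F j := Finset.sum_sub_distrib _ _
  linarith

theorem step (hc : 0 < c) (m : Fin c → ℕ) (i : Fin c) (hi : i ≠ ⟨0, hc⟩)
    (hmi : 2 ≤ m i) (hm : ∀ j, 1 ≤ m j) (hmax : ∀ j, m j ≤ m ⟨0, hc⟩) :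
    lam1 (adjMat (cliquesJoin s c m)) <
      lam1 (adjMat (cliquesJoin s c
        (fun j => if j = ⟨0, hc⟩ then m ⟨0, hc⟩ + 1 else if j = i then m i - 1 else m j))) := by
  set z : Fin c := ⟨0, hc⟩ with hz
  set m' : Fin c → ℕ :=
    fun j => if j = z then m z + 1 else if j = i then m i - 1 else m j with hm'
  have hziz : z ≠ i := Ne.symm hi
  have hm'z : (m' z : ℝ) = (m z : ℝ) + 1 := by rw [hm']; simp
  have hm'i : (m' i : ℝ) = (m i : ℝ) - 1 := by
    rw [hm']
    simp only [if_neg hi, if_pos rfl]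
    have : (1:ℕ) ≤ m i := hm i
    push_cast [Nat.cast_sub this]
    ring
  have hm'o : ∀ j, j ≠ z → j ≠ i → m' j = m j := by
    intro j h1 h2
    rw [hm']
    simp [h1, h2]
  have hm'pos : ∀ j, 1 ≤ m' j := by
    intro j
    show 1 ≤ if j = z then m z + 1 else if j = i then m i - 1 else m j
    by_cases h1 : j = z
    · rw [if_pos h1]; omega
    · rw [if_neg h1]
      by_cases h2 : j = i
      · rw [if_pos h2]; omega
      · rw [if_neg h2]; exact hm j
  haveI instV : Nonempty (Fin s ⊕ (Σ j : Fin c, Fin (m j))) :=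
    ⟨.inr ⟨z, ⟨0, hm z⟩⟩⟩
  haveI instV' : Nonempty (Fin s ⊕ (Σ j : Fin c, Fin (m' j))) :=
    ⟨.inr ⟨z, ⟨0, hm'pos z⟩⟩⟩
  obtain ⟨a, b, hann, hbnn, hne, heig⟩ := exists_cvec_eigen (s := s) hc m hm
  set μ := lam1 (adjMat (cliquesJoin s c m)) with hμ
  have hμnn : 0 ≤ μ := lam1_adj_nonneg _
  rw [mul_cvec] at heig
  have eqk : ∀ k, (s : ℝ) * a + ((m k : ℝ) - 1) * b k = μ * b k := by
    intro k
    have h := congrFun heig (Sum.inr ⟨k, ⟨0, hm k⟩⟩)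
    simpa [cvec] using h
  by_cases hs : s = 0
  · -- s = 0 case
    obtain ⟨k, hk⟩ : ∃ k, b k ≠ 0 := by
      by_contra hall
      push_neg at hall
      apply hne
      funext u
      cases u with
      | inl x => exact absurd x.pos (by omega)
      | inr p => simp [cvec, hall]
    have hμk : μ = (m k : ℝ) - 1 := by
      have h := eqk k
      rw [hs] at h
      push_cast at h
      have h' : ((m k : ℝ) - 1) * b k = μ * b k := by linarith
      exact (mul_right_cancel₀ hk h').symm
    have hμle : μ ≤ (m z : ℝ) - 1 := by
      have hle : (m k : ℝ) ≤ (m z : ℝ) := Nat.cast_le.2 (hmax k)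
      rw [hμk]; linarith
    set w := cvec s m' 0 (fun j => if j = z then (1:ℝ) else 0) with hw
    have hwne : w ≠ 0 := by
      intro h0
      have := congrFun h0 (Sum.inr ⟨z, ⟨0, hm'pos z⟩⟩)
      simp [hw, cvec] at this
    have hq' : w ⬝ᵥ (adjMat (cliquesJoin s c m') *ᵥ w) = ((m z : ℝ) + 1) * (m z : ℝ) := by
      rw [hw, mul_cvec, dotcc]
      rw [Finset.sum_congr rfl (fun j _ => show (m' j : ℝ) *
          ((if j = z then (1:ℝ) else 0) *
            ((s:ℝ) * 0 + ((m' j : ℝ) - 1) * (if j = z then (1:ℝ) else 0)))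
          = if j = z then (m' j : ℝ) * ((m' j : ℝ) - 1) else 0 from by split <;> ring)]
      rw [Finset.sum_ite_eq' Finset.univ z]
      simp only [Finset.mem_univ, if_true, hm'z]
      ring
    have hn' : w ⬝ᵥ w = (m z : ℝ) + 1 := by
      rw [hw, dotcc]
      rw [Finset.sum_congr rfl (fun j _ => show (m' j : ℝ) *
          ((if j = z then (1:ℝ) else 0) * (if j = z then (1:ℝ) else 0))
          = if j = z then (m' j : ℝ) else 0 from by split <;> ring)]
      rw [Finset.sum_ite_eq' Finset.univ z]
      simp only [Finset.mem_univ, if_true, hm'z]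
      ring
    refine lt_lam1_of_rayleigh (adjMat_isHermitian _) hwne ?_
    rw [hq', hn']
    have h0 : (0:ℝ) ≤ (m z : ℝ) := Nat.cast_nonneg _
    nlinarith
  · -- s > 0 case
    have hspos : 0 < s := Nat.pos_of_ne_zero hs
    have hscast : (0:ℝ) < s := by positivity
    have eqL : ((s : ℝ) - 1) * a + (∑ j, (m j : ℝ) * b j) = μ * a := by
      have h := congrFun heig (Sum.inl ⟨0, hspos⟩)
      simpa [cvec] using h
    have hapos : 0 < a := by
      rcases lt_or_eq_of_le hann with h | h
      · exact h
      · exfalso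
        have ha0 : a = 0 := h.symm
        have hsum0 : ∑ j, (m j : ℝ) * b j = 0 := by
          rw [ha0] at eqL
          linarith
        have hall : ∀ j, b j = 0 := by
          intro j
          have hterm := (Finset.sum_eq_zero_iff_of_nonneg
            (fun j _ => mul_nonneg (Nat.cast_nonneg _) (hbnn j))).1 hsum0 j (Finset.mem_univ j)
          have hmj : (0:ℝ) < (m j : ℝ) := by
            have := hm j; positivity
          exact (mul_eq_zero.1 hterm).resolve_left (ne_of_gt hmj)
        apply hne
        funext u
        cases u with
        | inl x => simp [cvec, ha0]
        | inr p => simp [cvec, hall]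
    have hsapos : 0 < (s:ℝ) * a := mul_pos hscast hapos
    have hrel : ∀ k, b k * (μ + 1 - (m k : ℝ)) = (s : ℝ) * a := by
      intro k
      have := eqk k
      linarith [eqk k]
    have hbpos : ∀ k, 0 < b k := by
      intro k
      rcases lt_or_eq_of_le (hbnn k) with h | h
      · exact h
      · exfalso
        have := hrel k
        rw [← h, zero_mul] at this
        linarith
    have hXpos : ∀ k, 0 < μ + 1 - (m k : ℝ) := by
      intro k
      have h := hrel k
      by_contra hle
      push_neg at hle
      nlinarith [hbpos k]
    have hbzi : b i ≤ b z := by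
      have hX : μ + 1 - (m z : ℝ) ≤ μ + 1 - (m i : ℝ) := by
        have : (m i : ℝ) ≤ (m z : ℝ) := Nat.cast_le.2 (hmax i)
        linarith
      have h1 : b i * (μ + 1 - (m z : ℝ)) ≤ b i * (μ + 1 - (m i : ℝ)) :=
        mul_le_mul_of_nonneg_left hX (hbnn i)
      have h2 : b i * (μ + 1 - (m z : ℝ)) ≤ b z * (μ + 1 - (m z : ℝ)) := by
        rw [hrel z]
        calc b i * (μ + 1 - (m z : ℝ)) ≤ b i * (μ + 1 - (m i : ℝ)) := h1
          _ = (s : ℝ) * a := hrel i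
      exact le_of_mul_le_mul_right h2 (hXpos z)
    -- test vector on m'
    set w := cvec s m' a b with hw
    have hwne : w ≠ 0 := by
      intro h0
      have := congrFun h0 (Sum.inl ⟨0, hspos⟩)
      simp [hw, cvec] at this
      exact absurd this (ne_of_gt hapos)
    -- eigen identity: Rayleigh equality for (m, a, b)
    have hqold : (s:ℝ) * (a * (((s : ℝ) - 1) * a + ∑ j, (m j : ℝ) * b j))
          + ∑ j, (m j : ℝ) * (b j * ((s:ℝ) * a + ((m j : ℝ) - 1) * b j))
        = μ * ((s:ℝ) * (a * a) + ∑ j, (m j : ℝ) * (b j * b j)) := by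
      have h1 : (cvec s m a b) ⬝ᵥ (adjMat (cliquesJoin s c m) *ᵥ cvec s m a b)
          = (cvec s m a b) ⬝ᵥ (μ • cvec s m a b) := by
        rw [← mul_cvec] at heig
        rw [heig]
      rw [mul_cvec, dotcc, dotProduct_smul, dotcc] at h1
      simpa using h1
    have hq'eq : w ⬝ᵥ (adjMat (cliquesJoin s c m') *ᵥ w)
        = (s:ℝ) * (a * (((s:ℝ) - 1) * a + ∑ j, (m' j : ℝ) * b j))
          + ∑ j, (m' j : ℝ) * (b j * ((s:ℝ) * a + ((m' j : ℝ) - 1) * b j)) := by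
      rw [hw, mul_cvec, dotcc]
    have hn'eq : w ⬝ᵥ w = (s:ℝ) * (a * a) + ∑ j, (m' j : ℝ) * (b j * b j) := by
      rw [hw, dotcc]
    have d1 : ∑ j, (m' j : ℝ) * b j = (∑ j, (m j : ℝ) * b j) + b z - b i := by
      rw [sum_shift hziz (fun j => (m j : ℝ) * b j) (fun j => (m' j : ℝ) * b j)
        (fun j h1 h2 => by show ((m' j : ℝ) * b j : ℝ) = _; rw [hm'o j h1 h2])]
      rw [hm'z, hm'i]
      ring
    have d2 : ∑ j, (m' j : ℝ) * (b j * b j)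
        = (∑ j, (m j : ℝ) * (b j * b j)) + b z * b z - b i * b i := by
      rw [sum_shift hziz (fun j => (m j : ℝ) * (b j * b j))
        (fun j => (m' j : ℝ) * (b j * b j)) (fun j h1 h2 => by
          show ((m' j : ℝ) * (b j * b j) : ℝ) = _
          rw [hm'o j h1 h2])]
      rw [hm'z, hm'i]
      ring
    have d3 : ∑ j, (m' j : ℝ) * (b j * ((s:ℝ) * a + ((m' j : ℝ) - 1) * b j))
        = (∑ j, (m j : ℝ) * (b j * ((s:ℝ) * a + ((m j : ℝ) - 1) * b j)))
          + ((s:ℝ) * a * b z + 2 * (m z : ℝ) * (b z * b z))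
          - ((s:ℝ) * a * b i + 2 * ((m i : ℝ) - 1) * (b i * b i)) := by
      rw [sum_shift hziz (fun j => (m j : ℝ) * (b j * ((s:ℝ) * a + ((m j : ℝ) - 1) * b j)))
        (fun j => (m' j : ℝ) * (b j * ((s:ℝ) * a + ((m' j : ℝ) - 1) * b j)))
        (fun j h1 h2 => by
          show ((m' j : ℝ) * (b j * ((s:ℝ) * a + ((m' j : ℝ) - 1) * b j)) : ℝ) = _
          rw [hm'o j h1 h2])]
      rw [hm'z, hm'i]
      ring
    refine lt_lam1_of_rayleigh (adjMat_isHermitian _) hwne ?_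
    rw [hq'eq, hn'eq, d1, d2, d3]
    have e2z : (s:ℝ) * a * b z = (μ + 1 - (m z : ℝ)) * (b z * b z) := by
      rw [← hrel z]
      ring
    have e2i : (s:ℝ) * a * b i = (μ + 1 - (m i : ℝ)) * (b i * b i) := by
      rw [← hrel i]
      ring
    have hsq : b i * b i ≤ b z * b z := mul_self_le_mul_self (hbnn i) hbzi
    have hbz2 : 0 < b z * b z := mul_pos (hbpos z) (hbpos z)
    have hpos : 0 < (μ + 2) * (b z * b z) - μ * (b i * b i) := by
      nlinarith [hbz2, mul_le_mul_of_nonneg_left hsq hμnn]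
    linarith [hqold, e2z, e2i, hpos]
end Step

lemma keyInd (s c : ℕ) (hc : 0 < c) (t : ℕ) :
    ∀ (d : ℕ) (m : Fin c → ℕ), (∀ j, 1 ≤ m j) → (∀ j, m j ≤ m ⟨0, hc⟩) →
      (∑ j, m j) = t → (∑ j ∈ Finset.univ.erase ⟨0, hc⟩, (m j - 1)) = d →
      lam1 (adjMat (cliquesJoin s c m)) ≤
        lam1 (adjMat (cliquesJoin s c (fun j => if j = ⟨0, hc⟩ then t - c + 1 else 1))) ∧
      (m ≠ (fun j => if j = ⟨0, hc⟩ then t - c + 1 else 1) →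
        lam1 (adjMat (cliquesJoin s c m)) <
          lam1 (adjMat (cliquesJoin s c (fun j => if j = ⟨0, hc⟩ then t - c + 1 else 1)))) := by
  intro d
  induction d with
  | zero =>
    intro m hm hmax hsum hmeas
    have hone : ∀ j, j ≠ (⟨0, hc⟩ : Fin c) → m j = 1 := by
      intro j hj
      have hj' : j ∈ Finset.univ.erase (⟨0, hc⟩ : Fin c) :=
        Finset.mem_erase.2 ⟨hj, Finset.mem_univ j⟩
      have := Finset.sum_eq_zero_iff.1 hmeas j hj'
      have := hm j
      omega
    have hcard : (Finset.univ.erase (⟨0, hc⟩ : Fin c)).card = c - 1 := by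
      rw [Finset.card_erase_of_mem (Finset.mem_univ _), Finset.card_univ, Fintype.card_fin]
    have hsplit : (∑ j, m j) = m ⟨0, hc⟩ + ∑ j ∈ Finset.univ.erase ⟨0, hc⟩, m j :=
      (Finset.add_sum_erase _ m (Finset.mem_univ _)).symm
    have hrest : ∑ j ∈ Finset.univ.erase (⟨0, hc⟩ : Fin c), m j = c - 1 := by
      rw [Finset.sum_congr rfl (fun j hj => hone j (Finset.mem_erase.1 hj).1)]
      rw [Finset.sum_const, hcard, smul_eq_mul, mul_one]
    have h5 : t = m ⟨0, hc⟩ + (c - 1) := by rw [← hsum, hsplit, hrest]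
    have hmz : m ⟨0, hc⟩ = t - c + 1 := by
      have := hm ⟨0, hc⟩
      omega
    have hmE : m = (fun j => if j = ⟨0, hc⟩ then t - c + 1 else 1) := by
      funext j
      by_cases h : j = ⟨0, hc⟩
      · rw [if_pos h, h, hmz]
      · rw [if_neg h, hone j h]
    subst hmE
    exact ⟨le_refl _, fun h => absurd rfl h⟩
  | succ d ih =>
    intro m hm hmax hsum hmeas
    have hex : ∃ i ∈ Finset.univ.erase (⟨0, hc⟩ : Fin c), m i - 1 ≠ 0 := by
      by_contra hall
      push_neg at hall
      rw [Finset.sum_eq_zero hall] at hmeas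
      omega
    obtain ⟨i, hi_mem, hi_ne⟩ := hex
    have hi : i ≠ ⟨0, hc⟩ := (Finset.mem_erase.1 hi_mem).1
    have hmi : 2 ≤ m i := by
      have := hm i
      omega
    set z : Fin c := ⟨0, hc⟩ with hz
    set m' : Fin c → ℕ :=
      fun j => if j = z then m z + 1 else if j = i then m i - 1 else m j with hm'
    have hm'pos : ∀ j, 1 ≤ m' j := by
      intro j
      show 1 ≤ if j = z then m z + 1 else if j = i then m i - 1 else m j
      by_cases h1 : j = z
      · rw [if_pos h1]; omega
      · rw [if_neg h1]
        by_cases h2 : j = i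
        · rw [if_pos h2]; omega
        · rw [if_neg h2]; exact hm j
    have hm'z : m' z = m z + 1 := by
      show (if z = z then m z + 1 else _) = _
      rw [if_pos rfl]
    have hm'i : m' i = m i - 1 := by
      show (if i = z then m z + 1 else if i = i then m i - 1 else m i) = _
      rw [if_neg hi, if_pos rfl]
    have hm'o : ∀ j, j ≠ z → j ≠ i → m' j = m j := by
      intro j h1 h2
      show (if j = z then _ else if j = i then _ else m j) = _
      rw [if_neg h1, if_neg h2]
    have hm'max : ∀ j, m' j ≤ m' z := by
      intro j
      rw [hm'z]
      by_cases h1 : j = z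
      · rw [h1, hm'z]
      · by_cases h2 : j = i
        · rw [h2, hm'i]
          have := hmax i
          omega
        · rw [hm'o j h1 h2]
          have := hmax j
          omega
    -- sums
    have hiz : i ∈ Finset.univ.erase z := hi_mem
    have e1 : ∀ f : Fin c → ℕ, (∑ j, f j) = f z + ∑ j ∈ Finset.univ.erase z, f j :=
      fun f => (Finset.add_sum_erase _ f (Finset.mem_univ _)).symm
    have e2 : ∀ f : Fin c → ℕ, (∑ j ∈ Finset.univ.erase z, f j)
        = f i + ∑ j ∈ (Finset.univ.erase z).erase i, f j :=
      fun f => (Finset.add_sum_erase _ f hiz).symm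
    have erest : ∑ j ∈ (Finset.univ.erase z).erase i, m' j
        = ∑ j ∈ (Finset.univ.erase z).erase i, m j := by
      refine Finset.sum_congr rfl fun j hj => ?_
      have h2 := (Finset.mem_erase.1 hj).1
      have h1 := (Finset.mem_erase.1 (Finset.mem_erase.1 hj).2).1
      exact hm'o j h1 h2
    have erest1 : ∑ j ∈ (Finset.univ.erase z).erase i, (m' j - 1)
        = ∑ j ∈ (Finset.univ.erase z).erase i, (m j - 1) := by
      refine Finset.sum_congr rfl fun j hj => ?_
      have h2 := (Finset.mem_erase.1 hj).1
      have h1 := (Finset.mem_erase.1 (Finset.mem_erase.1 hj).2).1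
      rw [hm'o j h1 h2]
    have hsum' : (∑ j, m' j) = t := by
      have a1 := e1 m'
      have a2 := e2 m'
      have a3 := e1 m
      have a4 := e2 m
      rw [erest] at a2
      omega
    have hmeas' : (∑ j ∈ Finset.univ.erase z, (m' j - 1)) = d := by
      have a2 := e2 (fun j => m' j - 1)
      have a4 := e2 (fun j => m j - 1)
      rw [erest1] at a2
      rw [hm'i] at a2
      omega
    have hstep := step (s := s) hc m i hi hmi hm hmax
    have hih := ih m' hm'pos hm'max hsum' hmeas'
    constructor
    · exact le_of_lt (lt_of_lt_of_le hstep hih.1)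
    · intro _
      exact lt_of_lt_of_le hstep hih.1


/-- For n₁ ≥ ⋯ ≥ n_c positive with n = Σ nᵢ + s and n₁ ≤ n − s − c + 1,
λ₁(K_s ∨ (K_{n₁} ∪ ⋯ ∪ K_{n_c})) ≤ λ₁(K_s ∨ (K_{n−s−c+1} ∪ (c−1)K₁)), with equality iff
(n₁,…,n_c) = (n−s−c+1, 1, …, 1). -/
theorem stmt5 (s c n : ℕ) (hc : 0 < c) (m : Fin c → ℕ)
    (hpos : ∀ i, 1 ≤ m i) (hmono : Antitone m)
    (hsum : n = (∑ i, m i) + s)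
    (hmax : m ⟨0, hc⟩ ≤ n - s - c + 1) :
    lam1 (adjMat (cliquesJoin s c m)) ≤
      lam1 (adjMat (cliquesJoin s c (fun i => if i.val = 0 then n - s - c + 1 else 1))) ∧
    (lam1 (adjMat (cliquesJoin s c m)) =
      lam1 (adjMat (cliquesJoin s c (fun i => if i.val = 0 then n - s - c + 1 else 1)))
      ↔ m = fun i => if i.val = 0 then n - s - c + 1 else 1) := by
  set t : ℕ := ∑ i, m i with ht
  have htn : n - s - c + 1 = t - c + 1 := by omega
  have hEeq : (fun i : Fin c => if i.val = 0 then n - s - c + 1 else 1)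
      = (fun j : Fin c => if j = ⟨0, hc⟩ then t - c + 1 else 1) := by
    funext j
    have hiff : (j.val = 0) ↔ (j = ⟨0, hc⟩) := by
      rw [Fin.ext_iff]
    by_cases h : j = ⟨0, hc⟩
    · rw [if_pos (hiff.2 h), if_pos h, htn]
    · rw [if_neg (fun hv => h (hiff.1 hv)), if_neg h]
  have hmaxz : ∀ j, m j ≤ m ⟨0, hc⟩ := by
    intro j
    exact hmono ((Fin.le_def).2 (Nat.zero_le _))
  have hkey := keyInd s c hc t (∑ j ∈ Finset.univ.erase ⟨0, hc⟩, (m j - 1)) m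
    hpos hmaxz rfl rfl
  have hval : lam1 (adjMat (cliquesJoin s c (fun i : Fin c => if i.val = 0 then n - s - c + 1 else 1)))
      = lam1 (adjMat (cliquesJoin s c (fun j : Fin c => if j = ⟨0, hc⟩ then t - c + 1 else 1))) :=
    congrArg (fun f : Fin c → ℕ => lam1 (adjMat (cliquesJoin s c f))) hEeq
  refine ⟨le_of_le_of_eq hkey.1 hval.symm, ?_, ?_⟩
  · intro heq
    by_contra hne
    have hne2 : m ≠ (fun j : Fin c => if j = ⟨0, hc⟩ then t - c + 1 else 1) := by
      rw [← hEeq]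
      exact hne
    exact absurd (heq.trans hval) (ne_of_lt (hkey.2 hne2))
  · intro heq
    exact congrArg (fun f : Fin c → ℕ => lam1 (adjMat (cliquesJoin s c f))) heq
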